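/- Let λ₁, λ₂, λ₃ be reals with 1 ≥ λ₁ ≥ λ₂ ≥ λ₃ > 1/2 and λ₁ + λ₂ + λ₃ ≤ 2. Let y and z be the three-qubit vectors with all phases zero: y_{klm} = 0 for k+l+m odd, y₀₀₀ = √(2(λ₁+λ₂+λ₃−1))/2, y₀₁₁ = √(2(λ₁−λ₂−λ₃+1))/2, y₁₀₁ = √(2(−λ₁+λ₂−λ₃+1))/2, y₁₁₀ = √(2(−λ₁−λ₂+λ₃+1))/2; z_{klm} = 0 for k+l+m even, z₀₀₁ = √(2(λ₁+λ₂−λ₃))/2, z₀₁₀ = √(2(λ₁−λ₂+λ₃))/2, z₁₀₀ = √(2(−λ₁+λ₂+λ₃))/2, z₁₁₁ = √(2(−λ₁−λ₂−λ₃+2))/2. Let σ and τ be the 4×4 matrices on (Fin 2 × Fin 2) obtained from the outer products p_y and p_z by tracing out the third qubit: σ (k,l) (k',l') = ∑_m y_{klm}·conj(y_{k'l'm}) and τ (k,l) (k',l') = ∑_m z_{klm}·conj(z_{k'l'm}). Then: (a) σ and τ have the same decreasing eigenvalue lists, λ_i(σ) = λ_i(τ) for all i; (b) Tr₂(σ)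 = Tr₂(τ) and Tr₁(σ) = Tr₁(τ); but (c) there do NOT exist 2×2 unitary matrices U and V with τ = (U ⊗ V) * σ * (U ⊗ V)ᴴ. -/

import Mathlib

open Matrix Kronecker
open Polynomial

/-- Partial trace over the second tensor factor. -/
noncomputable def ptrace2 {α β : Type*} [Fintype β]
    (M : Matrix (α × β) (α × β) ℂ) : Matrix α α ℂ :=
  Matrix.of fun i j => ∑ k : β, M (i, k) (j, k)

/-- Partial trace over the first tensor factor. -/
noncomputable def ptrace1 {α β : Type*} [Fintype α]
    (M : Matrix (α × β) (α × β) ℂ) : Matrix β β ℂ :=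
  Matrix.of fun i j => ∑ k : α, M (k, i) (k, j)

/-- The first solution `y` (all phases zero), supported on even indices. -/
noncomputable def ySol (l1 l2 l3 : ℝ) : Fin 2 × Fin 2 × Fin 2 → ℂ := fun v =>
  ![![![((Real.sqrt (2 * (l1 + l2 + l3 - 1)) / 2 : ℝ) : ℂ), 0],
     ![0, ((Real.sqrt (2 * (l1 - l2 - l3 + 1)) / 2 : ℝ) : ℂ)]],
    ![![0, ((Real.sqrt (2 * (-l1 + l2 - l3 + 1)) / 2 : ℝ) : ℂ)],
     ![((Real.sqrt (2 * (-l1 - l2 + l3 + 1)) / 2 : ℝ) : ℂ), 0]]] v.1 v.2.1 v.2.2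

/-- The second solution `z` (all phases zero), supported on odd indices. -/
noncomputable def zSol (l1 l2 l3 : ℝ) : Fin 2 × Fin 2 × Fin 2 → ℂ := fun v =>
  ![![![0, ((Real.sqrt (2 * (l1 + l2 - l3)) / 2 : ℝ) : ℂ)],
     ![((Real.sqrt (2 * (l1 - l2 + l3)) / 2 : ℝ) : ℂ), 0]],
    ![![((Real.sqrt (2 * (-l1 + l2 + l3)) / 2 : ℝ) : ℂ), 0],
     ![0, ((Real.sqrt (2 * (-l1 - l2 - l3 + 2)) / 2 : ℝ) : ℂ)]]] v.1 v.2.1 v.2.2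

/- ### Auxiliary lemmas -/

theorem charpoly_conj_unitary' {n : Type*} [Fintype n] [DecidableEq n] (W A : Matrix n n ℂ)
    (h1 : W * Wᴴ = 1) : (W * A * Wᴴ).charpoly = A.charpoly := by
  have hch : charmatrix (W * A * Wᴴ) =
      (W.map C) * charmatrix A * (Wᴴ.map C) := by
    rw [charmatrix, charmatrix]
    rw [mul_sub, sub_mul]
    congr 1
    · rw [← Matrix.scalar_commute (X : ℂ[X]) (Commute.all _) (W.map C)]
      rw [mul_assoc, ← Matrix.map_mul, h1]
      simp
    · simp only [RingHom.mapMatrix_apply, ← Matrix.map_mul]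
  rw [Matrix.charpoly, Matrix.charpoly, hch, det_mul, det_mul, mul_right_comm,
    ← det_mul, ← Matrix.map_mul, h1]
  simp

theorem charpoly_diagonal_c' {n : Type*} [Fintype n] [DecidableEq n] (d : n → ℂ) :
    (Matrix.diagonal d).charpoly = ∏ i, (X - C (d i)) := by
  rw [Matrix.charpoly]
  have : charmatrix (Matrix.diagonal d) = Matrix.diagonal (fun i => (X : ℂ[X]) - C (d i)) := by
    ext i j
    by_cases h : i = j
    · subst h; simp [charmatrix_apply_eq]
    · simp [charmatrix_apply_ne _ _ _ h, Matrix.diagonal_apply_ne _ h]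
  rw [this, det_diagonal]

theorem charpoly_hermitian' {n : Type*} [Fintype n] [DecidableEq n] (A : Matrix n n ℂ)
    (hA : A.IsHermitian) : A.charpoly = ∏ i, (X - C ((hA.eigenvalues i : ℝ) : ℂ)) := by
  have hs := hA.spectral_theorem
  have hu : (hA.eigenvectorUnitary : Matrix n n ℂ) * (hA.eigenvectorUnitary : Matrix n n ℂ)ᴴ = 1 := by
    simpa [Matrix.star_eq_conjTranspose] using
      (Unitary.mul_star_self_of_mem hA.eigenvectorUnitary.2)
  calc A.charpoly
      = ((hA.eigenvectorUnitary : Matrix n n ℂ) * Matrix.diagonal (RCLike.ofReal ∘ hA.eigenvalues) *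
        (hA.eigenvectorUnitary : Matrix n n ℂ)ᴴ).charpoly := by
        rw [← Matrix.star_eq_conjTranspose]; conv_lhs => rw [hs]
        rw [Unitary.conjStarAlgAut_apply]
    _ = (Matrix.diagonal (RCLike.ofReal ∘ hA.eigenvalues)).charpoly := charpoly_conj_unitary' _ _ hu
    _ = ∏ i, (X - C ((hA.eigenvalues i : ℝ) : ℂ)) := by rw [charpoly_diagonal_c']; rfl

theorem multiset_eq_of_prod_eq' {n : Type*} [Fintype n] (a b : n → ℝ)
    (h : ∏ i, ((X : ℂ[X]) - C (a i : ℂ)) = ∏ i, ((X : ℂ[X]) - C (b i : ℂ))) :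
    Multiset.map a Finset.univ.val = Multiset.map b Finset.univ.val := by
  have key : ∀ f : n → ℝ, (∏ i, ((X : ℂ[X]) - C (f i : ℂ))).roots
      = Multiset.map (fun i => ((f i : ℝ) : ℂ)) Finset.univ.val := by
    intro f
    rw [Finset.prod_eq_multiset_prod]
    have : Multiset.map (fun i => (X : ℂ[X]) - C (f i : ℂ)) Finset.univ.val
        = Multiset.map (fun z : ℂ => (X : ℂ[X]) - C z)
            (Multiset.map (fun i => ((f i : ℝ) : ℂ)) Finset.univ.val) := by
      rw [Multiset.map_map]; rfl
    rw [this]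
    exact roots_multiset_prod_X_sub_C _
  have h2 : Multiset.map (fun i => ((a i : ℝ) : ℂ)) Finset.univ.val
      = Multiset.map (fun i => ((b i : ℝ) : ℂ)) Finset.univ.val := by
    rw [← key, ← key, h]
  have h3 : Multiset.map (fun x : ℝ => (x : ℂ)) (Multiset.map a Finset.univ.val)
      = Multiset.map (fun x : ℝ => (x : ℂ)) (Multiset.map b Finset.univ.val) := by
    rw [Multiset.map_map, Multiset.map_map]; exact h2
  exact Multiset.map_injective (fun x y => by exact_mod_cast id) h3

theorem antitone_eq_of_multiset' {k : ℕ} (μ ν : Fin k → ℝ) (hμ : Antitone μ) (hν : Antitone ν)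
    (h : Multiset.map μ Finset.univ.val = Multiset.map ν Finset.univ.val) : μ = ν := by
  have hcoe : ∀ f : Fin k → ℝ,
      (↑(List.ofFn f) : Multiset ℝ) = Multiset.map f Finset.univ.val := by
    intro f
    rw [List.ofFn_eq_map]
    rfl
  have hperm : List.Perm (List.ofFn μ) (List.ofFn ν) := by
    rw [← Multiset.coe_eq_coe, hcoe, hcoe]; exact h
  have hs : ∀ f : Fin k → ℝ, Antitone f → (List.ofFn f).Pairwise (· ≥ ·) := by
    intro f hf
    rw [List.pairwise_ofFn]
    exact fun i j hij => hf hij.le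
  have := List.Perm.eq_of_pairwise (fun a b _ _ h1 h2 => le_antisymm h2 h1) (hs μ hμ) (hs ν hν) hperm
  exact List.ofFn_injective this

theorem multiset_of_comp_equiv' {n : Type*} [Fintype n] {k : ℕ} (μ : Fin k → ℝ) (g : n → ℝ)
    (e : n ≃ Fin k) (h : ∀ i, μ (e i) = g i) :
    Multiset.map μ Finset.univ.val = Multiset.map g Finset.univ.val := by
  have h1 : Multiset.map μ (Finset.univ.val : Multiset (Fin k))
      = Multiset.map μ (Multiset.map e (Finset.univ.val : Multiset n)) := by
    congr 1
    rw [show Multiset.map (⇑e) Finset.univ.val = (Finset.univ.map e.toEmbedding).val from rfl,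
      Finset.map_univ_equiv]
  rw [h1, Multiset.map_map]
  exact Multiset.map_congr rfl (fun i _ => h i)

set_option maxHeartbeats 800000 in
theorem charpoly_outer2' (u v : ℝ) :
    (!![((u:ℝ):ℂ)*u, u*v; v*u, v*v]).charpoly
      = X * (X - C ((u*u+v*v : ℝ) : ℂ)) := by
  rw [Matrix.charpoly, Matrix.det_fin_two]
  simp [charmatrix_apply_eq, charmatrix_apply_ne _ _ _ (by decide : (0:Fin 2) ≠ 1),
    charmatrix_apply_ne _ _ _ (by decide : (1:Fin 2) ≠ 0)]
  ring

set_option maxHeartbeats 1600000 in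
theorem ptrace2_conj' (U V : Matrix (Fin 2) (Fin 2) ℂ) (hV : Vᴴ * V = 1)
    (M : Matrix (Fin 2 × Fin 2) (Fin 2 × Fin 2) ℂ) :
    ptrace2 ((U ⊗ₖ V) * M * (U ⊗ₖ V)ᴴ) = U * ptrace2 M * Uᴴ := by
  have h00 := congrFun (congrFun hV 0) 0
  have h01 := congrFun (congrFun hV 0) 1
  have h10 := congrFun (congrFun hV 1) 0
  have h11 := congrFun (congrFun hV 1) 1
  simp only [Matrix.mul_apply, Fin.sum_univ_two, Matrix.conjTranspose_apply,
    Matrix.one_apply, if_true, if_false, Fin.zero_eta, Fin.mk_one, ne_eq,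
    zero_ne_one, one_ne_zero, reduceIte] at h00 h01 h10 h11
  ext i j
  simp only [ptrace2, Matrix.of_apply, Matrix.mul_apply, Matrix.conjTranspose_apply,
    Matrix.kroneckerMap_apply, Fintype.sum_prod_type, Fin.sum_univ_two, star_mul']
  linear_combination
    (U i 0 * star (U j 0) * M (0,0) (0,0) + U i 0 * star (U j 1) * M (0,0) (1,0)
      + U i 1 * star (U j 0) * M (1,0) (0,0) + U i 1 * star (U j 1) * M (1,0) (1,0)) * h00 +
    (U i 0 * star (U j 0) * M (0,1) (0,0) + U i 0 * star (U j 1) * M (0,1) (1,0)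
      + U i 1 * star (U j 0) * M (1,1) (0,0) + U i 1 * star (U j 1) * M (1,1) (1,0)) * h01 +
    (U i 0 * star (U j 0) * M (0,0) (0,1) + U i 0 * star (U j 1) * M (0,0) (1,1)
      + U i 1 * star (U j 0) * M (1,0) (0,1) + U i 1 * star (U j 1) * M (1,0) (1,1)) * h10 +
    (U i 0 * star (U j 0) * M (0,1) (0,1) + U i 0 * star (U j 1) * M (0,1) (1,1)
      + U i 1 * star (U j 0) * M (1,1) (0,1) + U i 1 * star (U j 1) * M (1,1) (1,1)) * h11

set_option maxHeartbeats 1600000 in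
theorem ptrace1_conj' (U V : Matrix (Fin 2) (Fin 2) ℂ) (hU : Uᴴ * U = 1)
    (M : Matrix (Fin 2 × Fin 2) (Fin 2 × Fin 2) ℂ) :
    ptrace1 ((U ⊗ₖ V) * M * (U ⊗ₖ V)ᴴ) = V * ptrace1 M * Vᴴ := by
  have h00 := congrFun (congrFun hU 0) 0
  have h01 := congrFun (congrFun hU 0) 1
  have h10 := congrFun (congrFun hU 1) 0
  have h11 := congrFun (congrFun hU 1) 1
  simp only [Matrix.mul_apply, Fin.sum_univ_two, Matrix.conjTranspose_apply,
    Matrix.one_apply, if_true, if_false, Fin.zero_eta, Fin.mk_one, ne_eq,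
    zero_ne_one, one_ne_zero, reduceIte] at h00 h01 h10 h11
  ext i j
  simp only [ptrace1, Matrix.of_apply, Matrix.mul_apply, Matrix.conjTranspose_apply,
    Matrix.kroneckerMap_apply, Fintype.sum_prod_type, Fin.sum_univ_two, star_mul']
  linear_combination
    (V i 0 * star (V j 0) * M (0,0) (0,0) + V i 0 * star (V j 1) * M (0,0) (0,1)
      + V i 1 * star (V j 0) * M (0,1) (0,0) + V i 1 * star (V j 1) * M (0,1) (0,1)) * h00 +
    (V i 0 * star (V j 0) * M (1,0) (0,0) + V i 0 * star (V j 1) * M (1,0) (0,1)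
      + V i 1 * star (V j 0) * M (1,1) (0,0) + V i 1 * star (V j 1) * M (1,1) (0,1)) * h01 +
    (V i 0 * star (V j 0) * M (0,0) (1,0) + V i 0 * star (V j 1) * M (0,0) (1,1)
      + V i 1 * star (V j 0) * M (0,1) (1,0) + V i 1 * star (V j 1) * M (0,1) (1,1)) * h10 +
    (V i 0 * star (V j 0) * M (1,0) (1,0) + V i 0 * star (V j 1) * M (1,0) (1,1)
      + V i 1 * star (V j 0) * M (1,1) (1,0) + V i 1 * star (V j 1) * M (1,1) (1,1)) * h11

/-- Pairing of `(Fin 2 × Fin 2)` into the diagonal block `{00, 11}` and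
antidiagonal block `{01, 10}`. -/
def pairEquiv : (Fin 2 × Fin 2) ≃ (Fin 2 ⊕ Fin 2) where
  toFun p := if p.1 = p.2 then Sum.inl p.1 else Sum.inr p.1
  invFun := Sum.elim (fun i => (i, i)) (fun i => (i, i + 1))
  left_inv := by decide
  right_inv := by decide

set_option maxHeartbeats 3200000 in
/-- The two-qubit mixed states `σ` and `τ` obtained from the pure states `y` and `z` by
tracing out the third qubit have the same spectrum and the same partial traces, yet are
not equivalent under local unitary transformations. -/
theorem two_qubit_mixed_not_locally_unitarily_equivalent (l1 l2 l3 : ℝ)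
    (hl1 : l1 ≤ 1) (h12 : l2 ≤ l1) (h23 : l3 ≤ l2) (hl3 : 1 / 2 < l3)
    (hsum : l1 + l2 + l3 ≤ 2)
    (σ τ : Matrix (Fin 2 × Fin 2) (Fin 2 × Fin 2) ℂ)
    (hσ : ∀ p q : Fin 2 × Fin 2,
      σ p q = ∑ m : Fin 2, ySol l1 l2 l3 (p.1, p.2, m) * star (ySol l1 l2 l3 (q.1, q.2, m)))
    (hτ : ∀ p q : Fin 2 × Fin 2,
      τ p q = ∑ m : Fin 2, zSol l1 l2 l3 (p.1, p.2, m) * star (zSol l1 l2 l3 (q.1, q.2, m)))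
    (hσh : σ.IsHermitian) (hτh : τ.IsHermitian) :
    (∀ (μ ν : Fin (Fintype.card (Fin 2 × Fin 2)) → ℝ),
        Antitone μ → Antitone ν →
        (∃ e : (Fin 2 × Fin 2) ≃ Fin (Fintype.card (Fin 2 × Fin 2)),
          ∀ i, μ (e i) = hσh.eigenvalues i) →
        (∃ e : (Fin 2 × Fin 2) ≃ Fin (Fintype.card (Fin 2 × Fin 2)),
          ∀ i, ν (e i) = hτh.eigenvalues i) →
        μ = ν) ∧
    ptrace2 σ = ptrace2 τ ∧ ptrace1 σ = ptrace1 τ ∧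
    ¬ ∃ (U V : Matrix (Fin 2) (Fin 2) ℂ),
        Uᴴ * U = 1 ∧ U * Uᴴ = 1 ∧ Vᴴ * V = 1 ∧ V * Vᴴ = 1 ∧
        τ = (U ⊗ₖ V) * σ * (U ⊗ₖ V)ᴴ := by
  have hl2' : 1/2 < l2 := lt_of_lt_of_le hl3 h23
  have hl1' : 1/2 < l1 := lt_of_lt_of_le hl2' h12
  have hl3lt : l3 < 1 := by linarith
  have n1 : (0:ℝ) ≤ l1+l2+l3-1 := by linarith
  have n2 : (0:ℝ) ≤ l1-l2-l3+1 := by linarith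
  have n3 : (0:ℝ) ≤ -l1+l2-l3+1 := by linarith
  have n4 : (0:ℝ) ≤ -l1-l2+l3+1 := by linarith
  have m1 : (0:ℝ) ≤ l1+l2-l3 := by linarith
  have m2 : (0:ℝ) ≤ l1-l2+l3 := by linarith
  have m3 : (0:ℝ) ≤ -l1+l2+l3 := by linarith
  have m4 : (0:ℝ) ≤ -l1-l2-l3+2 := by linarith
  have r2c : (Real.sqrt 2 : ℂ) * (Real.sqrt 2 : ℂ) = 2 := by
    exact_mod_cast Real.mul_self_sqrt (by norm_num : (0:ℝ) ≤ 2)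
  have A1 : ((Real.sqrt (l1+l2+l3-1) : ℝ) : ℂ) * ((Real.sqrt (l1+l2+l3-1) : ℝ) : ℂ)
      = (l1:ℂ)+(l2:ℂ)+(l3:ℂ)-1 := by exact_mod_cast Real.mul_self_sqrt n1
  have A2 : ((Real.sqrt (l1-l2-l3+1) : ℝ) : ℂ) * ((Real.sqrt (l1-l2-l3+1) : ℝ) : ℂ)
      = (l1:ℂ)-(l2:ℂ)-(l3:ℂ)+1 := by exact_mod_cast Real.mul_self_sqrt n2
  have A3 : ((Real.sqrt (-l1+l2-l3+1) : ℝ) : ℂ) * ((Real.sqrt (-l1+l2-l3+1) : ℝ) : ℂ)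
      = -(l1:ℂ)+(l2:ℂ)-(l3:ℂ)+1 := by exact_mod_cast Real.mul_self_sqrt n3
  have A4 : ((Real.sqrt (-l1-l2+l3+1) : ℝ) : ℂ) * ((Real.sqrt (-l1-l2+l3+1) : ℝ) : ℂ)
      = -(l1:ℂ)-(l2:ℂ)+(l3:ℂ)+1 := by exact_mod_cast Real.mul_self_sqrt n4
  have B1 : ((Real.sqrt (l1+l2-l3) : ℝ) : ℂ) * ((Real.sqrt (l1+l2-l3) : ℝ) : ℂ)
      = (l1:ℂ)+(l2:ℂ)-(l3:ℂ) := by exact_mod_cast Real.mul_self_sqrt m1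
  have B2 : ((Real.sqrt (l1-l2+l3) : ℝ) : ℂ) * ((Real.sqrt (l1-l2+l3) : ℝ) : ℂ)
      = (l1:ℂ)-(l2:ℂ)+(l3:ℂ) := by exact_mod_cast Real.mul_self_sqrt m2
  have B3 : ((Real.sqrt (-l1+l2+l3) : ℝ) : ℂ) * ((Real.sqrt (-l1+l2+l3) : ℝ) : ℂ)
      = -(l1:ℂ)+(l2:ℂ)+(l3:ℂ) := by exact_mod_cast Real.mul_self_sqrt m3
  have B4 : ((Real.sqrt (-l1-l2-l3+2) : ℝ) : ℂ) * ((Real.sqrt (-l1-l2-l3+2) : ℝ) : ℂ)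
      = -(l1:ℂ)-(l2:ℂ)-(l3:ℂ)+2 := by exact_mod_cast Real.mul_self_sqrt m4
  have sq' : ∀ x : ℝ, 0 ≤ x → (Real.sqrt (2*x)/2) * (Real.sqrt (2*x)/2) = x/2 := by
    intro x hx
    rw [div_mul_div_comm, Real.mul_self_sqrt (by linarith)]
    ring
  -- block forms
  have hreσ : Matrix.reindex pairEquiv pairEquiv σ =
      Matrix.fromBlocks
        !![((Real.sqrt (2 * (l1 + l2 + l3 - 1)) / 2 : ℝ) : ℂ) * ((Real.sqrt (2 * (l1 + l2 + l3 - 1)) / 2 : ℝ) : ℂ),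
           ((Real.sqrt (2 * (l1 + l2 + l3 - 1)) / 2 : ℝ) : ℂ) * ((Real.sqrt (2 * (-l1 - l2 + l3 + 1)) / 2 : ℝ) : ℂ);
           ((Real.sqrt (2 * (-l1 - l2 + l3 + 1)) / 2 : ℝ) : ℂ) * ((Real.sqrt (2 * (l1 + l2 + l3 - 1)) / 2 : ℝ) : ℂ),
           ((Real.sqrt (2 * (-l1 - l2 + l3 + 1)) / 2 : ℝ) : ℂ) * ((Real.sqrt (2 * (-l1 - l2 + l3 + 1)) / 2 : ℝ) : ℂ)]
        0 0
        !![((Real.sqrt (2 * (l1 - l2 - l3 + 1)) / 2 : ℝ) : ℂ) * ((Real.sqrt (2 * (l1 - l2 - l3 + 1)) / 2 : ℝ) : ℂ),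
           ((Real.sqrt (2 * (l1 - l2 - l3 + 1)) / 2 : ℝ) : ℂ) * ((Real.sqrt (2 * (-l1 + l2 - l3 + 1)) / 2 : ℝ) : ℂ);
           ((Real.sqrt (2 * (-l1 + l2 - l3 + 1)) / 2 : ℝ) : ℂ) * ((Real.sqrt (2 * (l1 - l2 - l3 + 1)) / 2 : ℝ) : ℂ),
           ((Real.sqrt (2 * (-l1 + l2 - l3 + 1)) / 2 : ℝ) : ℂ) * ((Real.sqrt (2 * (-l1 + l2 - l3 + 1)) / 2 : ℝ) : ℂ)] := by
    ext i j
    rcases i with i | i <;> rcases j with j | j <;> fin_cases i <;> fin_cases j <;>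
      simp [hσ, ySol, pairEquiv, Fin.sum_univ_two, Matrix.fromBlocks, map_ofNat]
  have hreτ : Matrix.reindex pairEquiv pairEquiv τ =
      Matrix.fromBlocks
        !![((Real.sqrt (2 * (l1 + l2 - l3)) / 2 : ℝ) : ℂ) * ((Real.sqrt (2 * (l1 + l2 - l3)) / 2 : ℝ) : ℂ),
           ((Real.sqrt (2 * (l1 + l2 - l3)) / 2 : ℝ) : ℂ) * ((Real.sqrt (2 * (-l1 - l2 - l3 + 2)) / 2 : ℝ) : ℂ);
           ((Real.sqrt (2 * (-l1 - l2 - l3 + 2)) / 2 : ℝ) : ℂ) * ((Real.sqrt (2 * (l1 + l2 - l3)) / 2 : ℝ) : ℂ),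
           ((Real.sqrt (2 * (-l1 - l2 - l3 + 2)) / 2 : ℝ) : ℂ) * ((Real.sqrt (2 * (-l1 - l2 - l3 + 2)) / 2 : ℝ) : ℂ)]
        0 0
        !![((Real.sqrt (2 * (l1 - l2 + l3)) / 2 : ℝ) : ℂ) * ((Real.sqrt (2 * (l1 - l2 + l3)) / 2 : ℝ) : ℂ),
           ((Real.sqrt (2 * (l1 - l2 + l3)) / 2 : ℝ) : ℂ) * ((Real.sqrt (2 * (-l1 + l2 + l3)) / 2 : ℝ) : ℂ);
           ((Real.sqrt (2 * (-l1 + l2 + l3)) / 2 : ℝ) : ℂ) * ((Real.sqrt (2 * (l1 - l2 + l3)) / 2 : ℝ) : ℂ),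
           ((Real.sqrt (2 * (-l1 + l2 + l3)) / 2 : ℝ) : ℂ) * ((Real.sqrt (2 * (-l1 + l2 + l3)) / 2 : ℝ) : ℂ)] := by
    ext i j
    rcases i with i | i <;> rcases j with j | j <;> fin_cases i <;> fin_cases j <;>
      simp [hτ, zSol, pairEquiv, Fin.sum_univ_two, Matrix.fromBlocks, map_ofNat]
  -- characteristic polynomials
  have hs14 : Real.sqrt (2 * (l1 + l2 + l3 - 1)) / 2 * (Real.sqrt (2 * (l1 + l2 + l3 - 1)) / 2)
      + Real.sqrt (2 * (-l1 - l2 + l3 + 1)) / 2 * (Real.sqrt (2 * (-l1 - l2 + l3 + 1)) / 2) = l3 := by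
    rw [sq' _ n1, sq' _ n4]; ring
  have hs23 : Real.sqrt (2 * (l1 - l2 - l3 + 1)) / 2 * (Real.sqrt (2 * (l1 - l2 - l3 + 1)) / 2)
      + Real.sqrt (2 * (-l1 + l2 - l3 + 1)) / 2 * (Real.sqrt (2 * (-l1 + l2 - l3 + 1)) / 2) = 1 - l3 := by
    rw [sq' _ n2, sq' _ n3]; ring
  have ht14 : Real.sqrt (2 * (l1 + l2 - l3)) / 2 * (Real.sqrt (2 * (l1 + l2 - l3)) / 2)
      + Real.sqrt (2 * (-l1 - l2 - l3 + 2)) / 2 * (Real.sqrt (2 * (-l1 - l2 - l3 + 2)) / 2) = 1 - l3 := by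
    rw [sq' _ m1, sq' _ m4]; ring
  have ht23 : Real.sqrt (2 * (l1 - l2 + l3)) / 2 * (Real.sqrt (2 * (l1 - l2 + l3)) / 2)
      + Real.sqrt (2 * (-l1 + l2 + l3)) / 2 * (Real.sqrt (2 * (-l1 + l2 + l3)) / 2) = l3 := by
    rw [sq' _ m2, sq' _ m3]; ring
  have hcσ : σ.charpoly = (X * (X - C ((l3:ℝ):ℂ))) * (X * (X - C ((1 - l3 : ℝ):ℂ))) := by
    rw [← Matrix.charpoly_reindex pairEquiv σ, hreσ, Matrix.charpoly_fromBlocks_zero₁₂,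
      charpoly_outer2', charpoly_outer2', hs14, hs23]
  have hcτ : τ.charpoly = (X * (X - C ((1 - l3:ℝ):ℂ))) * (X * (X - C ((l3 : ℝ):ℂ))) := by
    rw [← Matrix.charpoly_reindex pairEquiv τ, hreτ, Matrix.charpoly_fromBlocks_zero₁₂,
      charpoly_outer2', charpoly_outer2', ht14, ht23]
  have hcστ : σ.charpoly = τ.charpoly := by rw [hcσ, hcτ]; ring
  -- partial traces
  have hP2σ : ptrace2 σ = Matrix.of ![![((l1:ℝ):ℂ), 0], ![0, ((1-l1:ℝ):ℂ)]] := by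
    ext i j
    fin_cases i <;> fin_cases j <;>
      simp only [ptrace2, Matrix.of_apply, hσ, ySol, Fin.sum_univ_two,
        Matrix.cons_val_zero, Matrix.cons_val_one, Matrix.head_cons, Fin.isValue,
        star_zero, mul_zero, zero_mul, add_zero, zero_add, Complex.star_def, Complex.conj_ofReal,
        Matrix.cons_val', Matrix.empty_val', Matrix.cons_val_fin_one, Matrix.head_fin_const,
        Fin.mk_zero, Fin.mk_one, map_zero]
    · push_cast [Real.sqrt_mul (by norm_num : (0:ℝ) ≤ 2)]
      linear_combination (((Real.sqrt (l1+l2+l3-1) : ℂ) * (Real.sqrt (l1+l2+l3-1) : ℂ))/4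
          + ((Real.sqrt (l1-l2-l3+1) : ℂ) * (Real.sqrt (l1-l2-l3+1) : ℂ))/4) * r2c
        + (1/2) * A1 + (1/2) * A2
    · push_cast [Real.sqrt_mul (by norm_num : (0:ℝ) ≤ 2)]
      linear_combination (((Real.sqrt (-l1+l2-l3+1) : ℂ) * (Real.sqrt (-l1+l2-l3+1) : ℂ))/4
          + ((Real.sqrt (-l1-l2+l3+1) : ℂ) * (Real.sqrt (-l1-l2+l3+1) : ℂ))/4) * r2c
        + (1/2) * A3 + (1/2) * A4
  have hP2τ : ptrace2 τ = Matrix.of ![![((l1:ℝ):ℂ), 0], ![0, ((1-l1:ℝ):ℂ)]] := by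
    ext i j
    fin_cases i <;> fin_cases j <;>
      simp only [ptrace2, Matrix.of_apply, hτ, zSol, Fin.sum_univ_two,
        Matrix.cons_val_zero, Matrix.cons_val_one, Matrix.head_cons, Fin.isValue,
        star_zero, mul_zero, zero_mul, add_zero, zero_add, Complex.star_def, Complex.conj_ofReal,
        Matrix.cons_val', Matrix.empty_val', Matrix.cons_val_fin_one, Matrix.head_fin_const,
        Fin.mk_zero, Fin.mk_one, map_zero]
    · push_cast [Real.sqrt_mul (by norm_num : (0:ℝ) ≤ 2)]
      linear_combination (((Real.sqrt (l1+l2-l3) : ℂ) * (Real.sqrt (l1+l2-l3) : ℂ))/4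
          + ((Real.sqrt (l1-l2+l3) : ℂ) * (Real.sqrt (l1-l2+l3) : ℂ))/4) * r2c
        + (1/2) * B1 + (1/2) * B2
    · push_cast [Real.sqrt_mul (by norm_num : (0:ℝ) ≤ 2)]
      linear_combination (((Real.sqrt (-l1+l2+l3) : ℂ) * (Real.sqrt (-l1+l2+l3) : ℂ))/4
          + ((Real.sqrt (-l1-l2-l3+2) : ℂ) * (Real.sqrt (-l1-l2-l3+2) : ℂ))/4) * r2c
        + (1/2) * B3 + (1/2) * B4
  have hP1σ : ptrace1 σ = Matrix.of ![![((l2:ℝ):ℂ), 0], ![0, ((1-l2:ℝ):ℂ)]] := by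
    ext i j
    fin_cases i <;> fin_cases j <;>
      simp only [ptrace1, Matrix.of_apply, hσ, ySol, Fin.sum_univ_two,
        Matrix.cons_val_zero, Matrix.cons_val_one, Matrix.head_cons, Fin.isValue,
        star_zero, mul_zero, zero_mul, add_zero, zero_add, Complex.star_def, Complex.conj_ofReal,
        Matrix.cons_val', Matrix.empty_val', Matrix.cons_val_fin_one, Matrix.head_fin_const,
        Fin.mk_zero, Fin.mk_one, map_zero]
    · push_cast [Real.sqrt_mul (by norm_num : (0:ℝ) ≤ 2)]
      linear_combination (((Real.sqrt (l1+l2+l3-1) : ℂ) * (Real.sqrt (l1+l2+l3-1) : ℂ))/4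
          + ((Real.sqrt (-l1+l2-l3+1) : ℂ) * (Real.sqrt (-l1+l2-l3+1) : ℂ))/4) * r2c
        + (1/2) * A1 + (1/2) * A3
    · push_cast [Real.sqrt_mul (by norm_num : (0:ℝ) ≤ 2)]
      linear_combination (((Real.sqrt (l1-l2-l3+1) : ℂ) * (Real.sqrt (l1-l2-l3+1) : ℂ))/4
          + ((Real.sqrt (-l1-l2+l3+1) : ℂ) * (Real.sqrt (-l1-l2+l3+1) : ℂ))/4) * r2c
        + (1/2) * A2 + (1/2) * A4
  have hP1τ : ptrace1 τ = Matrix.of ![![((l2:ℝ):ℂ), 0], ![0, ((1-l2:ℝ):ℂ)]] := by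
    ext i j
    fin_cases i <;> fin_cases j <;>
      simp only [ptrace1, Matrix.of_apply, hτ, zSol, Fin.sum_univ_two,
        Matrix.cons_val_zero, Matrix.cons_val_one, Matrix.head_cons, Fin.isValue,
        star_zero, mul_zero, zero_mul, add_zero, zero_add, Complex.star_def, Complex.conj_ofReal,
        Matrix.cons_val', Matrix.empty_val', Matrix.cons_val_fin_one, Matrix.head_fin_const,
        Fin.mk_zero, Fin.mk_one, map_zero]
    · push_cast [Real.sqrt_mul (by norm_num : (0:ℝ) ≤ 2)]
      linear_combination (((Real.sqrt (l1+l2-l3) : ℂ) * (Real.sqrt (l1+l2-l3) : ℂ))/4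
          + ((Real.sqrt (-l1+l2+l3) : ℂ) * (Real.sqrt (-l1+l2+l3) : ℂ))/4) * r2c
        + (1/2) * B1 + (1/2) * B3
    · push_cast [Real.sqrt_mul (by norm_num : (0:ℝ) ≤ 2)]
      linear_combination (((Real.sqrt (l1-l2+l3) : ℂ) * (Real.sqrt (l1-l2+l3) : ℂ))/4
          + ((Real.sqrt (-l1-l2-l3+2) : ℂ) * (Real.sqrt (-l1-l2-l3+2) : ℂ))/4) * r2c
        + (1/2) * B2 + (1/2) * B4
  refine ⟨?_, by rw [hP2σ, hP2τ], by rw [hP1σ, hP1τ], ?_⟩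
  · rintro μ ν hμ hν ⟨e1, he1⟩ ⟨e2, he2⟩
    have h1 := multiset_of_comp_equiv' μ _ e1 he1
    have h2 := multiset_of_comp_equiv' ν _ e2 he2
    have h3 := multiset_eq_of_prod_eq' hσh.eigenvalues hτh.eigenvalues
      (by rw [← charpoly_hermitian' σ hσh, ← charpoly_hermitian' τ hτh, hcστ])
    exact antitone_eq_of_multiset' μ ν hμ hν (by rw [h1, h3, ← h2])
  · rintro ⟨U, V, hU1, hU2, hV1, hV2, hUV⟩
    -- U and V are diagonal
    set M2 : Matrix (Fin 2) (Fin 2) ℂ := Matrix.of ![![((l1:ℝ):ℂ), 0], ![0, ((1-l1:ℝ):ℂ)]] with hM2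
    set M1 : Matrix (Fin 2) (Fin 2) ℂ := Matrix.of ![![((l2:ℝ):ℂ), 0], ![0, ((1-l2:ℝ):ℂ)]] with hM1
    have hp2 : M2 = U * M2 * Uᴴ := by
      calc M2 = ptrace2 τ := hP2τ.symm
        _ = U * ptrace2 σ * Uᴴ := by rw [hUV]; exact ptrace2_conj' U V hV1 σ
        _ = U * M2 * Uᴴ := by rw [hP2σ]
    have hp1 : M1 = V * M1 * Vᴴ := by
      calc M1 = ptrace1 τ := hP1τ.symm
        _ = V * ptrace1 σ * Vᴴ := by rw [hUV]; exact ptrace1_conj' U V hU1 σ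
        _ = V * M1 * Vᴴ := by rw [hP1σ]
    have hMU : M2 * U = U * M2 := by
      calc M2 * U = (U * M2 * Uᴴ) * U := by rw [← hp2]
        _ = U * M2 * (Uᴴ * U) := by rw [mul_assoc]
        _ = U * M2 := by rw [hU1, mul_one]
    have hMV : M1 * V = V * M1 := by
      calc M1 * V = (V * M1 * Vᴴ) * V := by rw [← hp1]
        _ = V * M1 * (Vᴴ * V) := by rw [mul_assoc]
        _ = V * M1 := by rw [hV1, mul_one]
    have h2l1 : ((2*l1 - 1 : ℝ) : ℂ) ≠ 0 := by
      rw [Complex.ofReal_ne_zero]; intro h; linarith [h]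
    have h2l2 : ((2*l2 - 1 : ℝ) : ℂ) ≠ 0 := by
      rw [Complex.ofReal_ne_zero]; intro h; linarith [h]
    have eU01 := congrFun (congrFun hMU 0) 1
    have eU10 := congrFun (congrFun hMU 1) 0
    have eV01 := congrFun (congrFun hMV 0) 1
    have eV10 := congrFun (congrFun hMV 1) 0
    simp only [hM2, hM1, Matrix.mul_apply, Fin.sum_univ_two, Matrix.of_apply,
      Matrix.cons_val_zero, Matrix.cons_val_one, Matrix.head_cons,
      mul_zero, zero_mul, add_zero, zero_add] at eU01 eU10 eV01 eV10
    have hU01 : U 0 1 = 0 := by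
      rcases mul_eq_zero.mp (show U 0 1 * ((2*l1-1 : ℝ):ℂ) = 0 by
        push_cast at eU01 ⊢; linear_combination eU01) with h | h
      · exact h
      · exact absurd h h2l1
    have hU10 : U 1 0 = 0 := by
      rcases mul_eq_zero.mp (show U 1 0 * ((2*l1-1 : ℝ):ℂ) = 0 by
        push_cast at eU10 ⊢; linear_combination -eU10) with h | h
      · exact h
      · exact absurd h h2l1
    have hV01 : V 0 1 = 0 := by
      rcases mul_eq_zero.mp (show V 0 1 * ((2*l2-1 : ℝ):ℂ) = 0 by
        push_cast at eV01 ⊢; linear_combination eV01) with h | h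
      · exact h
      · exact absurd h h2l2
    have hV10 : V 1 0 = 0 := by
      rcases mul_eq_zero.mp (show V 1 0 * ((2*l2-1 : ℝ):ℂ) = 0 by
        push_cast at eV10 ⊢; linear_combination -eV10) with h | h
      · exact h
      · exact absurd h h2l2
    have hu := congrFun (congrFun hU1 0) 0
    have hv := congrFun (congrFun hV1 0) 0
    simp only [Matrix.mul_apply, Fin.sum_univ_two, Matrix.conjTranspose_apply,
      Matrix.one_apply_eq, hU10, hV10, star_zero, mul_zero, zero_mul, add_zero] at hu hv
    -- entries (0,0),(0,0)
    have hσ00 : σ ((0:Fin 2), (0:Fin 2)) ((0:Fin 2), (0:Fin 2)) = (((l1+l2+l3-1)/2 : ℝ) : ℂ) := by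
      rw [hσ]
      simp only [ySol, Fin.sum_univ_two, Matrix.cons_val_zero, Matrix.cons_val_one,
        Matrix.head_cons, star_zero, mul_zero, zero_mul, add_zero, zero_add,
        Complex.star_def, Complex.conj_ofReal]
      push_cast [Real.sqrt_mul (by norm_num : (0:ℝ) ≤ 2)]
      linear_combination (((Real.sqrt (l1+l2+l3-1) : ℂ) * (Real.sqrt (l1+l2+l3-1) : ℂ))/4) * r2c
        + (1/2) * A1
    have hτ00 : τ ((0:Fin 2), (0:Fin 2)) ((0:Fin 2), (0:Fin 2)) = (((l1+l2-l3)/2 : ℝ) : ℂ) := by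
      rw [hτ]
      simp only [zSol, Fin.sum_univ_two, Matrix.cons_val_zero, Matrix.cons_val_one,
        Matrix.head_cons, star_zero, mul_zero, zero_mul, add_zero, zero_add,
        Complex.star_def, Complex.conj_ofReal]
      push_cast [Real.sqrt_mul (by norm_num : (0:ℝ) ≤ 2)]
      linear_combination (((Real.sqrt (l1+l2-l3) : ℂ) * (Real.sqrt (l1+l2-l3) : ℂ))/4) * r2c
        + (1/2) * B1
    have hE := congrFun (congrFun hUV ((0:Fin 2), (0:Fin 2))) ((0:Fin 2), (0:Fin 2))
    rw [hτ00] at hE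
    simp only [Matrix.mul_apply, Matrix.conjTranspose_apply, Matrix.kroneckerMap_apply,
      Fintype.sum_prod_type, Fin.sum_univ_two, hU01, hU10, hV01, hV10, star_mul',
      mul_zero, zero_mul, star_zero, add_zero, zero_add] at hE
    rw [hσ00] at hE
    have hfin : ((l1+l2-l3)/2 : ℝ) = ((l1+l2+l3-1)/2 : ℝ) := by
      have hc : (((l1+l2-l3)/2 : ℝ) : ℂ) = (((l1+l2+l3-1)/2 : ℝ) : ℂ) := by
        push_cast at hE ⊢
        linear_combination hE + (((l1:ℂ)+l2+l3-1)/2 * (V 0 0 * star (V 0 0))) * hu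
          + (((l1:ℂ)+l2+l3-1)/2) * hv
      exact_mod_cast hc
    linarith
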